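/- Inclusion–exclusion formula for the count [S] used in the clique-detection algorithm: let S be a finite set of variables and cl a finite family of finite sets of variables. Then the number of nonempty subsets of S that are contained in at least one member of cl equals Σ over nonempty subfamilies A ⊆ cl of (−1)^{|A|+1} · (2^{|S ∩ ⋂_{C∈A} C|} − 1). -/
import Mathlib


variable {V : Type*} [DecidableEq V]

/-- `℘⁰(C)`: the set of nonempty subsets of a finite set `C`. -/
def pow0 (C : Finset V) : Set (Finset V) := {u | u ⊆ C ∧ u ≠ ∅}

/-- Concretization of a clique set: `↓cl = ⋃_{C ∈ cl} ℘⁰(C)`. -/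
def conc (cl : Set (Finset V)) : Set (Finset V) := ⋃ C ∈ cl, pow0 C

/-- Binary union: `s₁ ⊎ s₂ = {a ∪ b : a ∈ s₁, b ∈ s₂}`. -/
def bin (s₁ s₂ : Set (Finset V)) : Set (Finset V) :=
  {u | ∃ a ∈ s₁, ∃ b ∈ s₂, u = a ∪ b}

/-- Star union: all unions `⋃ T` over finite nonempty subfamilies `T ⊆ s`. -/
def starU (s : Set (Finset V)) : Set (Finset V) :=
  {u | ∃ T : Finset (Finset V), T.Nonempty ∧ ↑T ⊆ s ∧ u = T.sup id}

/-- `s_G`: the part of `s` relevant to `G` (groups intersecting `G`). -/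
def relG (G : Finset V) (s : Set (Finset V)) : Set (Finset V) :=
  {u ∈ s | u ∩ G ≠ ∅}

/-- `rel̄(S, cl) = {C \ S : C ∈ cl} \ {∅}`. -/
def relbar (S : Finset V) (cl : Set (Finset V)) : Set (Finset V) :=
  {d | (∃ C ∈ cl, d = C \ S) ∧ d ≠ ∅}

/-- `project(G, s) = {u ∩ G : u ∈ s} \ {∅}`. -/
def sproject (G : Finset V) (s : Set (Finset V)) : Set (Finset V) :=
  {d | (∃ u ∈ s, d = u ∩ G) ∧ d ≠ ∅}

/-- Abstract unification of the Sharing domain for `x = t`, `T` the variables of `t`. -/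
def amgu (x : V) (T : Finset V) (s : Set (Finset V)) : Set (Finset V) :=
  (s \ relG ({x} ∪ T) s) ∪ bin (starU (relG {x} s)) (starU (relG T s))

/-- The `extend` function of the Sharing domain. -/
def extendSh (Call : Set (Finset V)) (G : Finset V) (Prime : Set (Finset V)) :
    Set (Finset V) :=
  {u ∈ Call | u ∩ G = ∅} ∪ {u ∈ starU (relG G Call) | u ∩ G ∈ Prime}

/-- Union of all groups of `s` containing `x`, as a set of variables. -/
def occSet (s : Set (Finset V)) (x : V) : Set V :=
  ⋃ u ∈ {u ∈ s | x ∈ u}, (↑u : Set V)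

open Finset in
private theorem clique_inf'_card {V : Type*} [DecidableEq V] (S : Finset V)
    (A : Finset (Finset V)) (hA : A.Nonempty) :
    ((A.inf' hA (fun C => ((S ∩ C).powerset).erase ∅)).card : ℤ)
      = 2 ^ ((S.filter (fun y => ∀ C ∈ A, y ∈ C)).card) - 1 := by
  have h : A.inf' hA (fun C => ((S ∩ C).powerset).erase ∅)
      = ((S.filter (fun y => ∀ C ∈ A, y ∈ C)).powerset).erase ∅ := by
    ext u
    simp only [Finset.mem_inf', mem_erase, mem_powerset, subset_inter_iff]
    constructor
    · intro h
      obtain ⟨C0, hC0⟩ := hA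
      refine ⟨(h C0 hC0).1, fun x hx => ?_⟩
      have hxS := (h C0 hC0).2.1 hx
      exact mem_filter.2 ⟨hxS, fun C hC => (h C hC).2.2 hx⟩
    · rintro ⟨hne, hsub⟩ C hC
      refine ⟨hne, fun x hx => (mem_filter.1 (hsub hx)).1,
        fun x hx => (mem_filter.1 (hsub hx)).2 C hC⟩
  rw [h, card_erase_of_mem (by simp), card_powerset]
  have : 1 ≤ 2 ^ ((S.filter (fun y => ∀ C ∈ A, y ∈ C)).card) := Nat.one_le_two_pow
  push_cast [this]
  ring

open Finset in
/-- Inclusion–exclusion formula for the count [S] used in clique detection. -/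
theorem clique_count_inclusion_exclusion (S : Finset V) (cl : Finset (Finset V)) :
    (((S.powerset.filter (fun u => u ≠ ∅ ∧ ∃ C ∈ cl, u ⊆ C)).card : ℤ)) =
      ∑ A ∈ cl.powerset.filter (fun A => A ≠ ∅),
        (-1 : ℤ) ^ (A.card + 1) *
          (2 ^ ((S.filter (fun y => ∀ C ∈ A, y ∈ C)).card) - 1) := by
  classical
  have hset : S.powerset.filter (fun u => u ≠ ∅ ∧ ∃ C ∈ cl, u ⊆ C)
      = cl.biUnion (fun C => ((S ∩ C).powerset).erase ∅) := by
    ext u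
    simp only [mem_filter, mem_powerset, mem_biUnion, mem_erase, subset_inter_iff]
    tauto
  rw [hset, inclusion_exclusion_card_biUnion]
  simp only [clique_inf'_card]
  rw [Finset.sum_coe_sort (s := cl.powerset.filter (·.Nonempty))
    (f := fun A => (-1 : ℤ) ^ (A.card + 1) *
      (2 ^ ((S.filter (fun y => ∀ C ∈ A, y ∈ C)).card) - 1))]
  congr 1
  simp [Finset.nonempty_iff_ne_empty]
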